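/- The number of formal concepts of a formal context K = (G,M,I) is at least 2^k, where k is the maximal dimension of a contranominal scale contained in K as a subcontext. -/

import Mathlib

/-- `K[H,N]` is a contranominal scale of dimension `k` in the context with incidence `I`. -/
def IsContranominal {G M : Type*} (I : G → M → Prop) (H : Set G) (N : Set M) (k : ℕ) : Prop :=
  ∃ (h : Fin k → G) (n : Fin k → M), Function.Injective h ∧ Function.Injective n ∧
    Set.range h = H ∧ Set.range n = N ∧ ∀ i j, I (h i) (n j) ↔ i ≠ j

/-- The number of formal concepts of a finite formal context is at least `2^k`, where
`k` is the maximal dimension of a contranominal scale contained in it. -/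
theorem card_concepts_ge_two_pow {G M : Type*} [Finite G] [Finite M]
    (r : G → M → Prop) (k : ℕ)
    (hex : ∃ H N, IsContranominal r H N k)
    (hmax : ∀ (j : ℕ) (H : Set G) (N : Set M), IsContranominal r H N j → j ≤ k) :
    2 ^ k ≤ Nat.card (Concept G M r) := by
  obtain ⟨H, N, h, n, hinj, ninj, -, -, hrel⟩ := hex
  haveI : Finite (Concept G M r) :=
    Finite.of_injective (fun c : Concept G M r => c.extent) Concept.extent_injective
  -- Build a concept for each subset `S` of `Fin k`.
  let f : Set (Fin k) → Concept G M r := fun S =>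
    { extent := lowerPolar r (n '' S)
      intent := upperPolar r (lowerPolar r (n '' S))
      upperPolar_extent := rfl
      lowerPolar_intent := lowerPolar_upperPolar_lowerPolar _ _ }
  have hf : Function.Injective f := by
    intro S T hST
    have hext : lowerPolar r (n '' S) = lowerPolar r (n '' T) :=
      congrArg (fun c : Concept G M r => c.extent) hST
    -- key: i ∈ S ↔ i ∈ T
    have key : ∀ (S T : Set (Fin k)),
        lowerPolar r (n '' S) = lowerPolar r (n '' T) → ∀ i ∈ S, i ∈ T := by
      intro S T hST i hiS
      by_contra hiT
      have hmem : h i ∈ lowerPolar r (n '' T) := by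
        rintro m ⟨j, hjT, rfl⟩
        exact (hrel i j).2 (fun hij => hiT (hij ▸ hjT))
      rw [← hST] at hmem
      exact (hrel i i).1 (hmem ⟨i, hiS, rfl⟩) rfl
    exact Set.eq_of_subset_of_subset (fun i hi => key S T hext i hi)
      (fun i hi => key T S hext.symm i hi)
  calc 2 ^ k = Nat.card (Set (Fin k)) := by
        simp [Nat.card_eq_fintype_card]
    _ ≤ Nat.card (Concept G M r) := Nat.card_le_card_of_injective f hf
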